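/- Let X be a real n×p matrix, Y ∈ ℝⁿ, λ ≥ 0, and α ∈ (0, 1]. If αλ ≥ max₁≤i≤p |(Xᵀ Y)ᵢ|, then the zero vector minimizes the elastic net criterion: E(0) ≤ E(β) for every β ∈ ℝᵖ, where E(β) = ½‖Y − Xβ‖₂² + λα‖β‖₁ + λ(1−α)/2 · ‖β‖₂². -/
import Mathlib


open Matrix BigOperators

theorem zero_minimizes_elastic_net_of_large_lambda {n p : ℕ}
    (X : Matrix (Fin n) (Fin p) ℝ) (Y : Fin n → ℝ)
    (lam α : ℝ) (hlam : 0 ≤ lam) (hα : α ∈ Set.Ioc (0 : ℝ) 1)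
    (hbig : ∀ i : Fin p, |Xᵀ.mulVec Y i| ≤ α * lam)
    (E : (Fin p → ℝ) → ℝ)
    (hE : ∀ β, E β = (1 / 2) * ∑ i, (Y i - X.mulVec β i) ^ 2
        + lam * α * ∑ j, |β j|
        + lam * (1 - α) / 2 * ∑ j, (β j) ^ 2) :
    ∀ β : Fin p → ℝ, E 0 ≤ E β := by
  intro β
  rw [hE, hE]
  simp only [Matrix.mulVec_zero, Pi.zero_apply, abs_zero, sub_zero, ne_eq,
    OfNat.ofNat_ne_zero, not_false_eq_true, zero_pow, Finset.sum_const_zero,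
    mul_zero, add_zero]
  have key : ∑ j, Xᵀ.mulVec Y j * β j ≤ α * lam * ∑ j, |β j| := by
    calc ∑ j, Xᵀ.mulVec Y j * β j
        ≤ ∑ j, |Xᵀ.mulVec Y j * β j| :=
          Finset.sum_le_sum fun j _ => le_abs_self _
      _ = ∑ j, |Xᵀ.mulVec Y j| * |β j| := by simp [abs_mul]
      _ ≤ ∑ j, α * lam * |β j| :=
          Finset.sum_le_sum fun j _ =>
            mul_le_mul_of_nonneg_right (hbig j) (abs_nonneg _)
      _ = α * lam * ∑ j, |β j| := by rw [Finset.mul_sum]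
  have swap : ∑ i, Y i * X.mulVec β i = ∑ j, Xᵀ.mulVec Y j * β j := by
    simp only [Matrix.mulVec, dotProduct, Matrix.transpose_apply,
      Finset.mul_sum, Finset.sum_mul]
    rw [Finset.sum_comm]
    exact Finset.sum_congr rfl fun i _ => Finset.sum_congr rfl fun j _ => by ring
  have expand : ∑ i, (Y i - X.mulVec β i) ^ 2
      = ∑ i, Y i ^ 2 - 2 * ∑ i, Y i * X.mulVec β i + ∑ i, (X.mulVec β i) ^ 2 := by
    have h : ∀ i, (Y i - X.mulVec β i) ^ 2
        = Y i ^ 2 - 2 * (Y i * X.mulVec β i) + (X.mulVec β i) ^ 2 := fun i => by ring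
    simp only [h, Finset.sum_add_distrib, Finset.sum_sub_distrib, ← Finset.mul_sum]
  rw [expand, swap]
  have hQ : (0:ℝ) ≤ ∑ i, (X.mulVec β i) ^ 2 := Finset.sum_nonneg fun i _ => sq_nonneg _
  have hR : (0:ℝ) ≤ lam * (1 - α) / 2 * ∑ j, (β j) ^ 2 := by
    have h1 : (0:ℝ) ≤ 1 - α := by linarith [hα.2]
    have h2 : (0:ℝ) ≤ ∑ j, (β j) ^ 2 := Finset.sum_nonneg fun j _ => sq_nonneg _
    positivity
  nlinarith [key]
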